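/- Let κ be an infinite set. The set T = {(A,B,C) ∈ F(κ)³ : C \ m(A,B,C) finite} is closed under the balanced-closure operation (A,B,C) ↦ (A ∪ m, B ∪ m, C ∪ m) where m = m(A,B,C). -/
import Mathlib


open Set

/-- `m(X,Y,Z) = (X∩Y) ∪ (X∩Z) ∪ (Y∩Z)`. -/
def mSet {κ : Type*} (X Y Z : Set κ) : Set κ := (X ∩ Y) ∪ (X ∩ Z) ∪ (Y ∩ Z)

/-- The finite/cofinite algebra on `κ`. -/
def FinCofin (κ : Type*) : Set (Set κ) := {X | X.Finite ∨ Xᶜ.Finite}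

/-- A triple of sets is balanced if its pairwise intersections coincide. -/
def BalancedT {κ : Type*} (t : Set κ × Set κ × Set κ) : Prop :=
  t.1 ∩ t.2.1 = t.1 ∩ t.2.2 ∧ t.1 ∩ t.2.2 = t.2.1 ∩ t.2.2

/-- The set `T` of triples from `F(κ)³` with `C \ m(A,B,C)` finite. -/
def Tset (κ : Type*) : Set (Set κ × Set κ × Set κ) :=
  {t | t.1 ∈ FinCofin κ ∧ t.2.1 ∈ FinCofin κ ∧ t.2.2 ∈ FinCofin κ ∧
    (t.2.2 \ mSet t.1 t.2.1 t.2.2).Finite}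

/-- The lattice `S` of balanced triples in `T`. -/
def Sset (κ : Type*) : Set (Set κ × Set κ × Set κ) :=
  {t | BalancedT t ∧ t ∈ Tset κ}

/-- Componentwise meet (intersection) of triples. -/
def meetT {κ : Type*} (t u : Set κ × Set κ × Set κ) : Set κ × Set κ × Set κ :=
  (t.1 ∩ u.1, t.2.1 ∩ u.2.1, t.2.2 ∩ u.2.2)

/-- The balanced closure of a triple of sets. -/
def clT {κ : Type*} (t : Set κ × Set κ × Set κ) : Set κ × Set κ × Set κ :=
  (t.1 ∪ (t.2.1 ∩ t.2.2), t.2.1 ∪ (t.1 ∩ t.2.2), t.2.2 ∪ (t.1 ∩ t.2.1))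

/-- Join of balanced triples: balanced closure of the componentwise union. -/
def joinT {κ : Type*} (t u : Set κ × Set κ × Set κ) : Set κ × Set κ × Set κ :=
  clT (t.1 ∪ u.1, t.2.1 ∪ u.2.1, t.2.2 ∪ u.2.2)

/-- The Banaschewski map `f(A,B,C) = (κ\A, κ\(B∪C), κ\(A∪B∪C))`. -/
def fT {κ : Type*} (t : Set κ × Set κ × Set κ) : Set κ × Set κ × Set κ :=
  (t.1ᶜ, (t.2.1 ∪ t.2.2)ᶜ, (t.1 ∪ t.2.1 ∪ t.2.2)ᶜ)

/-- The map `g(A,C) = (A, A∩C, C)`. -/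
def gT {κ : Type*} (p : Set κ × Set κ) : Set κ × Set κ × Set κ :=
  (p.1, p.1 ∩ p.2, p.2)

/-- The maximal Boolean sublattice `B = g(A)`. -/
def Bset (κ : Type*) : Set (Set κ × Set κ × Set κ) :=
  {t | ∃ A C : Set κ, A ∈ FinCofin κ ∧ C ∈ FinCofin κ ∧ (symmDiff A C).Finite ∧
    t = (A, A ∩ C, C)}


lemma finCofin_union {κ : Type*} {X Y : Set κ} (hX : X ∈ FinCofin κ) (hY : Y ∈ FinCofin κ) :
    X ∪ Y ∈ FinCofin κ := by
  rcases hX with hX | hX <;> rcases hY with hY | hY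
  · exact Or.inl (hX.union hY)
  · exact Or.inr (by rw [Set.compl_union]; exact hY.subset (Set.inter_subset_right))
  · exact Or.inr (by rw [Set.compl_union]; exact hX.subset (Set.inter_subset_left))
  · exact Or.inr (by rw [Set.compl_union]; exact hX.subset (Set.inter_subset_left))

lemma finCofin_inter {κ : Type*} {X Y : Set κ} (hX : X ∈ FinCofin κ) (hY : Y ∈ FinCofin κ) :
    X ∩ Y ∈ FinCofin κ := by
  rcases hX with hX | hX <;> rcases hY with hY | hY
  · exact Or.inl (hX.subset Set.inter_subset_left)
  · exact Or.inl (hX.subset Set.inter_subset_left)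
  · exact Or.inl (hY.subset Set.inter_subset_right)
  · exact Or.inr (by rw [Set.compl_inter]; exact hX.union hY)

lemma finCofin_mSet {κ : Type*} {X Y Z : Set κ} (hX : X ∈ FinCofin κ) (hY : Y ∈ FinCofin κ)
    (hZ : Z ∈ FinCofin κ) : mSet X Y Z ∈ FinCofin κ :=
  finCofin_union (finCofin_union (finCofin_inter hX hY) (finCofin_inter hX hZ))
    (finCofin_inter hY hZ)

theorem stmt5 {κ : Type*} [Infinite κ] (t : Set κ × Set κ × Set κ) (ht : t ∈ Tset κ) :
    (t.1 ∪ mSet t.1 t.2.1 t.2.2, t.2.1 ∪ mSet t.1 t.2.1 t.2.2,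
      t.2.2 ∪ mSet t.1 t.2.1 t.2.2) ∈ Tset κ := by
  obtain ⟨hA, hB, hC, hfin⟩ := ht
  set m := mSet t.1 t.2.1 t.2.2 with hm
  have hmF : m ∈ FinCofin κ := finCofin_mSet hA hB hC
  refine ⟨finCofin_union hA hmF, finCofin_union hB hmF, finCofin_union hC hmF, ?_⟩
  refine hfin.subset ?_
  intro x hx
  simp only [Set.mem_diff] at hx ⊢
  obtain ⟨hx1, hx2⟩ := hx
  have hxm : x ∉ m := fun h => hx2 (by
    simp only [mSet, Set.mem_union, Set.mem_inter_iff]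
    exact Or.inl (Or.inl ⟨Or.inr h, Or.inr h⟩))
  exact ⟨hx1.resolve_right hxm, hxm⟩
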